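/- Let l, m₁, ρ be real numbers with l > 0, m₁ > 0, ρ > 0, let 0 < b₁ < l, and let λ > 0. There exist twice continuously differentiable functions X₁, X₂ : ℝ → ℝ, with X₁ not identically zero on [0, b₁] or X₂ not identically zero on [b₁, l], such that X₁''(x) = −λ²X₁(x) for all x ∈ [0, b₁], X₂''(x) = −λ²X₂(x) for all x ∈ [b₁, l], X₁(0) = 0, X₂(l) = 0, X₁(b₁) = X₂(b₁), and X₂'(b₁) − X₁'(b₁) = −(m₁/ρ)·λ²·X₁(b₁), if and only if sin(λl)/λ − (m₁/ρ)·sin(λb₁)·sin(λ(l−b₁)) = 0. -/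

import Mathlib

open Real Set

lemma sinf_hasDerivAt (A lam φ x : ℝ) :
    HasDerivAt (fun x => A * Real.sin (lam * x + φ)) (A * lam * Real.cos (lam * x + φ)) x := by
  have h1 : HasDerivAt (fun x : ℝ => lam * x + φ) lam x := by
    simpa using ((hasDerivAt_id x).const_mul lam).add_const φ
  have h2 := (Real.hasDerivAt_sin (lam * x + φ)).comp x h1
  simpa [mul_comm, mul_assoc, mul_left_comm] using h2.const_mul A

lemma cosf_hasDerivAt (A lam φ x : ℝ) :
    HasDerivAt (fun x => A * lam * Real.cos (lam * x + φ))
      (-lam ^ 2 * (A * Real.sin (lam * x + φ))) x := by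
  have h1 : HasDerivAt (fun x : ℝ => lam * x + φ) lam x := by
    simpa using ((hasDerivAt_id x).const_mul lam).add_const φ
  have h2 := (Real.hasDerivAt_cos (lam * x + φ)).comp x h1
  have h3 := h2.const_mul (A * lam)
  exact h3.congr_deriv (by ring)

lemma sinf_deriv (A lam φ : ℝ) :
    deriv (fun x => A * Real.sin (lam * x + φ)) = fun x => A * lam * Real.cos (lam * x + φ) := by
  funext x
  exact (sinf_hasDerivAt A lam φ x).deriv

lemma sinf_deriv2 (A lam φ x : ℝ) :
    deriv (deriv (fun x => A * Real.sin (lam * x + φ))) x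
      = -lam ^ 2 * (A * Real.sin (lam * x + φ)) := by
  rw [sinf_deriv]
  exact (cosf_hasDerivAt A lam φ x).deriv

lemma sinf_contDiff (A lam φ : ℝ) :
    ContDiff ℝ 2 (fun x => A * Real.sin (lam * x + φ)) := by
  exact contDiff_const.mul (Real.contDiff_sin.comp ((contDiff_const.mul contDiff_id).add contDiff_const))

lemma ode_unique {lam : ℝ} (hlam : lam ≠ 0) {a b c : ℝ} {g : ℝ → ℝ}
    (hg : ContDiff ℝ 2 g)
    (hode : ∀ x ∈ Icc a b, deriv (deriv g) x = -lam ^ 2 * g x)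
    (hc : c ∈ Icc a b) (h0 : g c = 0) (h1 : deriv g c = 0) :
    ∀ x ∈ Icc a b, g x = 0 := by
  have hg1 : Differentiable ℝ g := hg.differentiable (by norm_num)
  have hg2 : Differentiable ℝ (deriv g) := by
    have h2 : ContDiff ℝ ((1:ℕ) + 1) g := by exact_mod_cast hg
    exact (contDiff_succ_iff_deriv.mp h2).2.2.differentiable (by norm_num)
  set E : ℝ → ℝ := fun x => (deriv g x) ^ 2 + lam ^ 2 * (g x) ^ 2 with hE
  have hEderiv : ∀ x ∈ Icc a b, HasDerivAt E 0 x := by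
    intro x hx
    have h1' : HasDerivAt (fun y => (deriv g y) ^ 2) (2 * deriv g x * deriv (deriv g) x) x := by
      have h : HasDerivAt (deriv g ^ 2) (2 * deriv g x * deriv (deriv g) x) x := by
        simpa [mul_comm, mul_assoc] using ((hg2 x).hasDerivAt.pow 2)
      exact h
    have h2' : HasDerivAt (fun y => lam ^ 2 * (g y) ^ 2) (lam ^ 2 * (2 * g x * deriv g x)) x := by
      simpa [mul_comm, mul_assoc] using ((hg1 x).hasDerivAt.pow 2).const_mul (lam ^ 2)
    have := h1'.add h2'
    refine this.congr_deriv ?_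
    rw [hode x hx]; ring
  have hconst := constant_of_has_deriv_right_zero (f := E)
    (by rw [hE]; exact (hg2.continuous.pow 2).add (continuous_const.mul (hg1.continuous.pow 2)) : Continuous E).continuousOn
    (fun x hx => ((hEderiv x (Ico_subset_Icc_self hx)).hasDerivWithinAt))
  have hEc : E c = 0 := by simp [hE, h0, h1]
  intro x hx
  have h4 : E x = E a := hconst x hx
  have h5 : E c = E a := hconst c hc
  have h6 : E x = 0 := by rw [h4, ← h5, hEc]
  simp only [hE] at h6
  have hlam2 : 0 < lam ^ 2 := by positivity
  have h7 : g x ^ 2 = 0 := by nlinarith [sq_nonneg (deriv g x), sq_nonneg (g x)]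
  exact pow_eq_zero_iff (by norm_num) |>.mp h7

lemma deriv_eq_of_eqOn {f h : ℝ → ℝ} {a b c d : ℝ} (hab : a < b) (hc : c ∈ Icc a b)
    (hf : DifferentiableAt ℝ f c) (hh : HasDerivAt h d c)
    (heq : ∀ x ∈ Icc a b, f x = h x) : deriv f c = d := by
  have u := (uniqueDiffOn_Icc hab) c hc
  have H2 : HasDerivWithinAt h (deriv f c) (Icc a b) c :=
    (hf.hasDerivAt.hasDerivWithinAt).congr (fun x hx => (heq x hx).symm) (heq c hc).symm
  rw [← H2.derivWithin u, (hh.hasDerivWithinAt).derivWithin u]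

lemma contDiff2_deriv_diff {f : ℝ → ℝ} (hf : ContDiff ℝ 2 f) :
    Differentiable ℝ (deriv f) := by
  have h2 : ContDiff ℝ ((1:ℕ) + 1) f := by exact_mod_cast hf
  exact (contDiff_succ_iff_deriv.mp h2).2.2.differentiable (by norm_num)

lemma ode_solution_form {lam A : ℝ} (hlam : lam ≠ 0) {a b c φ : ℝ} {f : ℝ → ℝ}
    (hf : ContDiff ℝ 2 f)
    (hode : ∀ x ∈ Icc a b, deriv (deriv f) x = -lam ^ 2 * f x)
    (hc : c ∈ Icc a b)
    (hv : f c = A * Real.sin (lam * c + φ))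
    (hd : deriv f c = A * lam * Real.cos (lam * c + φ)) :
    ∀ x ∈ Icc a b, f x = A * Real.sin (lam * x + φ) := by
  set g : ℝ → ℝ := fun x => f x - A * Real.sin (lam * x + φ) with hgdef
  have hfd : Differentiable ℝ f := hf.differentiable (by norm_num)
  have hfd' : Differentiable ℝ (deriv f) := contDiff2_deriv_diff hf
  have hcg : ContDiff ℝ 2 g := hf.sub (sinf_contDiff A lam φ)
  have hdg : deriv g = fun x => deriv f x - A * lam * Real.cos (lam * x + φ) := by
    funext x
    exact (((hfd x).hasDerivAt).sub (sinf_hasDerivAt A lam φ x)).deriv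
  have hode' : ∀ x ∈ Icc a b, deriv (deriv g) x = -lam ^ 2 * g x := by
    intro x hx
    rw [hdg]
    rw [HasDerivAt.deriv (f := fun x => deriv f x - A * lam * Real.cos (lam * x + φ)) (((hfd' x).hasDerivAt).sub (cosf_hasDerivAt A lam φ x)), hode x hx]
    simp only [hgdef]; ring
  have hz := ode_unique hlam hcg hode' hc (by simp [hgdef, hv])
    (by rw [hdg]; simp [hd])
  intro x hx
  have := hz x hx
  simpa [hgdef, sub_eq_zero] using this

lemma sin_witness {lam b₁ : ℝ} (hlam : 0 < lam) (hb : 0 < b₁) :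
    ∃ x ∈ Icc (0:ℝ) b₁, Real.sin (lam * x) ≠ 0 := by
  refine ⟨min b₁ (π / (2 * lam)), ⟨le_min hb.le (by positivity), min_le_left _ _⟩, ?_⟩
  have hx0 : 0 < min b₁ (π / (2 * lam)) := lt_min hb (by positivity)
  have h1 : 0 < lam * min b₁ (π / (2 * lam)) := by positivity
  have h2 : lam * min b₁ (π / (2 * lam)) < π := by
    have := min_le_right b₁ (π / (2 * lam))
    have h3 : lam * min b₁ (π / (2 * lam)) ≤ lam * (π / (2 * lam)) :=
      mul_le_mul_of_nonneg_left this hlam.le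
    have h4 : lam * (π / (2 * lam)) = π / 2 := by field_simp
    have h5 : π / 2 < π := by linarith [Real.pi_pos]
    linarith
  exact ne_of_gt (Real.sin_pos_of_pos_of_lt_pi h1 h2)

lemma construct_solution (l m₁ ρ b₁ lam A C : ℝ) (hl : 0 < l) (hb₁ : 0 < b₁)
    (hb₁l : b₁ < l) (hlam : 0 < lam) (hA : A ≠ 0)
    (h₁ : A * Real.sin (lam * b₁) = -C * Real.sin (lam * (l - b₁)))
    (h₂ : C * lam * Real.cos (lam * (l - b₁)) - A * lam * Real.cos (lam * b₁)
        = -(m₁ / ρ) * lam ^ 2 * (A * Real.sin (lam * b₁))) :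
    (∃ X₁ X₂ : ℝ → ℝ, ContDiff ℝ 2 X₁ ∧ ContDiff ℝ 2 X₂ ∧
      (¬ (∀ x ∈ Icc (0 : ℝ) b₁, X₁ x = 0) ∨ ¬ (∀ x ∈ Icc b₁ l, X₂ x = 0)) ∧
      (∀ x ∈ Icc (0 : ℝ) b₁, deriv (deriv X₁) x = -lam ^ 2 * X₁ x) ∧
      (∀ x ∈ Icc b₁ l, deriv (deriv X₂) x = -lam ^ 2 * X₂ x) ∧
      X₁ 0 = 0 ∧ X₂ l = 0 ∧ X₁ b₁ = X₂ b₁ ∧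
      deriv X₂ b₁ - deriv X₁ b₁ = -(m₁ / ρ) * lam ^ 2 * X₁ b₁) := by
  have htrig1 : Real.sin (lam * b₁ + -(lam * l)) = -Real.sin (lam * (l - b₁)) := by
    rw [show lam * b₁ + -(lam * l) = -(lam * (l - b₁)) by ring, Real.sin_neg]
  have htrig2 : Real.cos (lam * b₁ + -(lam * l)) = Real.cos (lam * (l - b₁)) := by
    rw [show lam * b₁ + -(lam * l) = -(lam * (l - b₁)) by ring, Real.cos_neg]
  refine ⟨fun x => A * Real.sin (lam * x + 0), fun x => C * Real.sin (lam * x + -(lam * l)),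
    sinf_contDiff A lam 0, sinf_contDiff C lam (-(lam * l)), ?_, ?_, ?_, ?_, ?_, ?_, ?_⟩
  · left
    intro hall
    obtain ⟨x, hx, hsx⟩ := sin_witness hlam hb₁
    have := hall x hx
    simp only [add_zero] at this
    exact hsx (by
      rcases mul_eq_zero.mp this with h | h
      · exact absurd h hA
      · exact h)
  · intro x hx; exact sinf_deriv2 A lam 0 x
  · intro x hx; exact sinf_deriv2 C lam (-(lam * l)) x
  · simp
  · simp
  · show A * Real.sin (lam * b₁ + 0) = C * Real.sin (lam * b₁ + -(lam * l))
    rw [add_zero, htrig1]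
    linear_combination h₁
  · beta_reduce
    rw [(sinf_hasDerivAt C lam (-(lam * l)) b₁).deriv, (sinf_hasDerivAt A lam 0 b₁).deriv]
    rw [htrig2]
    simp only [add_zero]
    linarith [h₂]

/-- For the cable with one discrete load of mass `m₁` fixed at `b₁ ∈ (0, l)`,
a nontrivial solution of the continuous-discrete boundary problem exists
iff `sin(λl)/λ − (m₁/ρ)·sin(λb₁)·sin(λ(l−b₁)) = 0`. -/
theorem cable_one_load_eigenvalue_characterization
    (l m₁ ρ b₁ lam : ℝ) (hl : 0 < l) (hm : 0 < m₁) (hρ : 0 < ρ)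
    (hb₁ : 0 < b₁) (hb₁l : b₁ < l) (hlam : 0 < lam) :
    (∃ X₁ X₂ : ℝ → ℝ, ContDiff ℝ 2 X₁ ∧ ContDiff ℝ 2 X₂ ∧
      (¬ (∀ x ∈ Icc (0 : ℝ) b₁, X₁ x = 0) ∨ ¬ (∀ x ∈ Icc b₁ l, X₂ x = 0)) ∧
      (∀ x ∈ Icc (0 : ℝ) b₁, deriv (deriv X₁) x = -lam ^ 2 * X₁ x) ∧
      (∀ x ∈ Icc b₁ l, deriv (deriv X₂) x = -lam ^ 2 * X₂ x) ∧
      X₁ 0 = 0 ∧ X₂ l = 0 ∧ X₁ b₁ = X₂ b₁ ∧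
      deriv X₂ b₁ - deriv X₁ b₁ = -(m₁ / ρ) * lam ^ 2 * X₁ b₁) ↔
    Real.sin (lam * l) / lam
      - (m₁ / ρ) * Real.sin (lam * b₁) * Real.sin (lam * (l - b₁)) = 0 := by
  set s₁ := Real.sin (lam * b₁) with hs₁
  set s₂ := Real.sin (lam * (l - b₁)) with hs₂
  set c₁ := Real.cos (lam * b₁) with hc₁
  set c₂ := Real.cos (lam * (l - b₁)) with hc₂
  have hsin : Real.sin (lam * l) = s₁ * c₂ + c₁ * s₂ := by
    rw [show lam * l = lam * b₁ + lam * (l - b₁) by ring, Real.sin_add]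
  have hpyth : s₂ ^ 2 + c₂ ^ 2 = 1 := Real.sin_sq_add_cos_sq _
  have htrig1 : Real.sin (lam * b₁ + -(lam * l)) = -s₂ := by
    rw [show lam * b₁ + -(lam * l) = -(lam * (l - b₁)) by ring, Real.sin_neg]
  have htrig2 : Real.cos (lam * b₁ + -(lam * l)) = c₂ := by
    rw [show lam * b₁ + -(lam * l) = -(lam * (l - b₁)) by ring, Real.cos_neg]
  constructor
  · rintro ⟨X₁, X₂, hC1, hC2, hnt, hode1, hode2, h0, hl0, hcj, hjump⟩
    set A := deriv X₁ 0 / lam with hAdef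
    set C := deriv X₂ l / lam with hCdef
    have hX1eq : ∀ x ∈ Icc (0:ℝ) b₁, X₁ x = A * Real.sin (lam * x + 0) := by
      apply ode_solution_form hlam.ne' hC1 hode1 (⟨le_rfl, hb₁.le⟩ : (0:ℝ) ∈ Icc (0:ℝ) b₁)
      · simp [h0]
      · simp [hAdef]
        field_simp
    have hX2eq : ∀ x ∈ Icc b₁ l, X₂ x = C * Real.sin (lam * x + -(lam * l)) := by
      apply ode_solution_form hlam.ne' hC2 hode2 (⟨hb₁l.le, le_rfl⟩ : l ∈ Icc b₁ l)
      · simp [hl0]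
      · simp [hCdef]
        field_simp
    have hd1 : Differentiable ℝ X₁ := hC1.differentiable (by norm_num)
    have hd2 : Differentiable ℝ X₂ := hC2.differentiable (by norm_num)
    have hder1 : deriv X₁ b₁ = A * lam * Real.cos (lam * b₁ + 0) :=
      deriv_eq_of_eqOn hb₁ ⟨hb₁.le, le_rfl⟩ (hd1 b₁) (sinf_hasDerivAt A lam 0 b₁) hX1eq
    have hder2 : deriv X₂ b₁ = C * lam * Real.cos (lam * b₁ + -(lam * l)) :=
      deriv_eq_of_eqOn hb₁l ⟨le_rfl, hb₁l.le⟩ (hd2 b₁) (sinf_hasDerivAt C lam (-(lam * l)) b₁) hX2eq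
    have hv1 : X₁ b₁ = A * s₁ := by
      rw [hX1eq b₁ ⟨hb₁.le, le_rfl⟩, add_zero]
    have hv2 : X₂ b₁ = -C * s₂ := by
      rw [hX2eq b₁ ⟨le_rfl, hb₁l.le⟩, htrig1]; ring
    have E1 : A * s₁ = -C * s₂ := by rw [← hv1, ← hv2]; exact hcj
    have E2 : C * lam * c₂ - A * lam * c₁ = -(m₁ / ρ) * lam ^ 2 * (A * s₁) := by
      rw [hder2, hder1, htrig2, add_zero, hv1] at hjump
      exact hjump
    have hAC : A ≠ 0 ∨ C ≠ 0 := by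
      rcases hnt with h | h
      · left; intro hA0
        exact h fun x hx => by rw [hX1eq x hx, hA0, zero_mul]
      · right; intro hC0
        exact h fun x hx => by rw [hX2eq x hx, hC0, zero_mul]
    by_cases hA : A = 0
    · rcases hAC with h | hC
      · exact absurd hA h
      · rw [hA] at E1 E2
        have hs2 : s₂ = 0 := by
          rcases mul_eq_zero.mp (by linarith [E1] : -C * s₂ = 0) with h | h
          · exact absurd (neg_eq_zero.mp h) hC
          · exact h
        have hc2 : c₂ = 0 := by
          have : C * lam * c₂ = 0 := by linarith [E2]
          rcases mul_eq_zero.mp this with h | h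
          · rcases mul_eq_zero.mp h with h | h
            · exact absurd h hC
            · exact absurd h hlam.ne'
          · exact h
        rw [hs2, hc2] at hpyth; norm_num at hpyth
    · have key : A * (lam * Real.sin (lam * l) - (m₁ / ρ) * lam ^ 2 * s₁ * s₂) = 0 := by
        linear_combination (A * lam) * hsin + lam * c₂ * E1 - s₂ * E2
      have h9 : lam * Real.sin (lam * l) - (m₁ / ρ) * lam ^ 2 * s₁ * s₂ = 0 :=
        (mul_eq_zero.mp key).resolve_left hA
      rw [sub_eq_zero, div_eq_iff hlam.ne']
      exact mul_left_cancel₀ hlam.ne'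
        (show lam * Real.sin (lam * l) = lam * (m₁ / ρ * s₁ * s₂ * lam) by linear_combination h9)
  · intro hT
    by_cases hs2 : s₂ = 0
    · have hsl : Real.sin (lam * l) = 0 := by
        have h := hT
        rw [hs2, mul_zero, sub_zero, div_eq_zero_iff] at h
        exact h.resolve_right hlam.ne'
      have hc2 : c₂ ≠ 0 := by
        intro h; rw [hs2, h] at hpyth; norm_num at hpyth
      have hs1 : s₁ = 0 := by
        rw [hsin, hs2] at hsl
        have : s₁ * c₂ = 0 := by linarith
        exact (mul_eq_zero.mp this).resolve_right hc2
      apply construct_solution l m₁ ρ b₁ lam 1 (c₁ / c₂) hl hb₁ hb₁l hlam one_ne_zero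
      · rw [← hs₁, ← hs₂, hs1, hs2]; ring
      · rw [← hc₁, ← hc₂, ← hs₁, hs1]
        field_simp
        ring
    · have hT' : Real.sin (lam * l) = (m₁ / ρ) * lam * s₁ * s₂ := by
        rw [sub_eq_zero, div_eq_iff hlam.ne'] at hT
        linear_combination hT
      apply construct_solution l m₁ ρ b₁ lam s₂ (-s₁) hl hb₁ hb₁l hlam hs2
      · rw [← hs₁, ← hs₂]; ring
      · rw [← hc₁, ← hc₂]
        linear_combination lam * hsin - lam * hT'
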